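/- Let A be an n×m real matrix with m ≥ 1, b̂ ∈ ℝⁿ, s ∈ ℝ^m with all entries positive, and ŝ_gap > 0, and let Â = [A, −b̂·1_mᵀ], assumed to have full row rank. Suppose η_{Â}((s, ŝ_gap·1_m)) ≤ 1/40. Let ŝ'_gap = (1 + 1/(10√m))·ŝ_gap. Then η_{Â}((s, ŝ'_gap·1_m)) ≤ 51/400. -/

import Mathlib

open Matrix

open Matrix

/-- Euclidean norm of a vector. -/
noncomputable def eucNorm {ι : Type*} [Fintype ι] (v : ι → ℝ) : ℝ :=
  Real.sqrt (v ⬝ᵥ v)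

/-- The diagonal matrix `S⁻¹` with entries `1 / s i`. -/
noncomputable def diagInv {ι : Type*} [Fintype ι] [DecidableEq ι] (s : ι → ℝ) :
    Matrix ι ι ℝ :=
  Matrix.diagonal fun i => (s i)⁻¹

/-- `x_A(s) = S⁻¹ (1 - S⁻¹ Aᵀ (A S⁻² Aᵀ)⁻¹ A S⁻¹ 1)`. -/
noncomputable def xA {n m : ℕ} (A : Matrix (Fin n) (Fin m) ℝ) (s : Fin m → ℝ) :
    Fin m → ℝ :=
  (diagInv s *ᵥ fun _ => 1) -
    ((diagInv s * diagInv s * Aᵀ * (A * diagInv s * diagInv s * Aᵀ)⁻¹ * A * diagInv s) *ᵥ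
      fun _ => 1)

/-- `η_A(s) = ‖S⁻¹ Aᵀ (A S⁻² Aᵀ)⁻¹ A S⁻¹ 1‖`. -/
noncomputable def etaA {κ ι : Type*} [Fintype κ] [Fintype ι] [DecidableEq κ] [DecidableEq ι]
    (B : Matrix κ ι ℝ) (t : ι → ℝ) : ℝ :=
  eucNorm ((diagInv t * Bᵀ * (B * diagInv t * diagInv t * Bᵀ)⁻¹ * B * diagInv t) *ᵥ
    fun _ => 1)


noncomputable def toE {ι : Type*} [Fintype ι] (v : ι → ℝ) : EuclideanSpace ℝ ι :=
  (WithLp.equiv 2 (ι → ℝ)).symm v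

lemma eucNorm_eq_norm {ι : Type*} [Fintype ι] (v : ι → ℝ) : eucNorm v = ‖toE v‖ := by
  rw [eucNorm, EuclideanSpace.norm_eq]
  congr 1
  simp [dotProduct, toE, Real.norm_eq_abs, sq_abs, sq]

lemma dot_eq_inner {ι : Type*} [Fintype ι] (v w : ι → ℝ) :
    v ⬝ᵥ w = (inner ℝ (toE v) (toE w) : ℝ) := by
  simp [dotProduct, toE, PiLp.inner_apply, RCLike.inner_apply, mul_comm]

lemma eucNorm_add_le {ι : Type*} [Fintype ι] (u w : ι → ℝ) :
    eucNorm (u + w) ≤ eucNorm u + eucNorm w := by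
  rw [eucNorm_eq_norm, eucNorm_eq_norm, eucNorm_eq_norm]
  exact norm_add_le _ _

lemma proj_norm_le {ι : Type*} [Fintype ι] (P : Matrix ι ι ℝ) (hPt : Pᵀ = P)
    (hPP : P * P = P) (x : ι → ℝ) : eucNorm (P *ᵥ x) ≤ eucNorm x := by
  have key : (P *ᵥ x) ⬝ᵥ (P *ᵥ x) = (P *ᵥ x) ⬝ᵥ x := by
    conv_lhs => rw [Matrix.dotProduct_mulVec]
    rw [← Matrix.mulVec_transpose, hPt, Matrix.mulVec_mulVec, hPP]
  have h1 : ‖toE (P *ᵥ x)‖ ^ 2 ≤ ‖toE (P *ᵥ x)‖ * ‖toE x‖ := by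
    rw [← real_inner_self_eq_norm_sq, ← dot_eq_inner, key, dot_eq_inner]
    exact real_inner_le_norm _ _
  have ha := norm_nonneg (toE (P *ᵥ x))
  have hb := norm_nonneg (toE x)
  rw [eucNorm_eq_norm, eucNorm_eq_norm]
  nlinarith [h1, ha, hb]

lemma isUnit_det_of_rank_eq_card {ι : Type*} [Fintype ι] [DecidableEq ι] (A : Matrix ι ι ℝ)
    (h : A.rank = Fintype.card ι) : IsUnit A.det := by
  rw [← Matrix.isUnit_iff_isUnit_det, ← Matrix.mulVec_injective_iff_isUnit]
  have hsurj : Function.Surjective A.mulVecLin := by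
    rw [← LinearMap.range_eq_top]
    apply Submodule.eq_top_of_finrank_eq
    rw [Matrix.rank] at h
    rw [h, Module.finrank_pi]
  have hinj : Function.Injective A.mulVecLin :=
    (LinearMap.injective_iff_surjective).mpr hsurj
  intro x y hxy
  exact hinj (by simpa [Matrix.mulVecLin_apply] using hxy)

lemma gram_isUnit {n : ℕ} {ι : Type*} [Fintype ι] [DecidableEq ι] (B : Matrix (Fin n) ι ℝ)
    (hrank : B.rank = n) (t : ι → ℝ) (ht : ∀ i, 0 < t i) :
    IsUnit ((B * diagInv t) * (B * diagInv t)ᵀ).det := by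
  have hdet : IsUnit (diagInv t).det := by
    rw [diagInv, Matrix.det_diagonal, isUnit_iff_ne_zero]
    exact Finset.prod_ne_zero_iff.mpr fun i _ => inv_ne_zero (ht i).ne'
  have h1 : (B * diagInv t).rank = n := by
    rw [Matrix.rank_mul_eq_left_of_isUnit_det _ _ hdet, hrank]
  apply isUnit_det_of_rank_eq_card
  rw [Matrix.rank_self_mul_transpose, h1, Fintype.card_fin]

lemma proj_transpose {n : ℕ} {ι : Type*} [Fintype ι] [DecidableEq ι]
    (M : Matrix (Fin n) ι ℝ) :
    (Mᵀ * (M * Mᵀ)⁻¹ * M)ᵀ = Mᵀ * (M * Mᵀ)⁻¹ * M := by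
  rw [Matrix.transpose_mul, Matrix.transpose_mul, Matrix.transpose_transpose,
    Matrix.transpose_nonsing_inv, Matrix.transpose_mul, Matrix.transpose_transpose,
    Matrix.mul_assoc]

lemma proj_mul_self {n : ℕ} {ι : Type*} [Fintype ι] [DecidableEq ι]
    (M : Matrix (Fin n) ι ℝ) (h : IsUnit (M * Mᵀ).det) :
    (Mᵀ * (M * Mᵀ)⁻¹ * M) * (Mᵀ * (M * Mᵀ)⁻¹ * M) = Mᵀ * (M * Mᵀ)⁻¹ * M := by
  have : (M * Mᵀ)⁻¹ * (M * (Mᵀ * ((M * Mᵀ)⁻¹ * M))) = (M * Mᵀ)⁻¹ * M := by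
    rw [← Matrix.mul_assoc M, Matrix.mul_nonsing_inv_cancel_left _ _ h]
  simp only [Matrix.mul_assoc] at this ⊢
  rw [this]

lemma mul_proj {n : ℕ} {ι : Type*} [Fintype ι] [DecidableEq ι]
    (M : Matrix (Fin n) ι ℝ) (h : IsUnit (M * Mᵀ).det) :
    M * (Mᵀ * (M * Mᵀ)⁻¹ * M) = M := by
  rw [Matrix.mul_assoc Mᵀ, ← Matrix.mul_assoc M, Matrix.mul_nonsing_inv_cancel_left _ _ h]

lemma eucNorm_pointwise_mul_le {ι : Type*} [Fintype ι] (a v : ι → ℝ) (c : ℝ)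
    (hc : 0 ≤ c) (h : ∀ i, |a i| ≤ c) :
    eucNorm (fun i => a i * v i) ≤ c * eucNorm v := by
  rw [eucNorm, eucNorm, ← Real.sqrt_sq hc, ← Real.sqrt_mul (sq_nonneg c)]
  apply Real.sqrt_le_sqrt
  rw [dotProduct, dotProduct, Finset.mul_sum]
  apply Finset.sum_le_sum
  intro i _
  have h1 : a i * a i ≤ c ^ 2 := by
    have := h i
    nlinarith [abs_nonneg (a i), sq_abs (a i)]
  nlinarith [mul_self_nonneg (v i)]

lemma etaA_eq {n : ℕ} {ι : Type*} [Fintype ι] [DecidableEq ι] (B : Matrix (Fin n) ι ℝ)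
    (t : ι → ℝ) :
    etaA B t = eucNorm (((B * diagInv t)ᵀ * ((B * diagInv t) * (B * diagInv t)ᵀ)⁻¹ *
      (B * diagInv t)) *ᵥ fun _ => 1) := by
  rw [etaA]
  congr 2
  simp only [Matrix.transpose_mul, diagInv, Matrix.diagonal_transpose, Matrix.mul_assoc]


/-- **Unshifting the objective bound.** If `Â = [A, -b̂ 1ᵀ]` has full row rank and
`η_{Â}((s, ŝ_gap 1)) ≤ 1/40`, then for `ŝ'_gap = (1 + 1/(10√m)) ŝ_gap` we have
`η_{Â}((s, ŝ'_gap 1)) ≤ 51/400`. -/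
theorem unshift_eta_bound {n m : ℕ} (hm : 1 ≤ m) (A : Matrix (Fin n) (Fin m) ℝ)
    (bhat : Fin n → ℝ) (s : Fin m → ℝ) (hs : ∀ i, 0 < s i)
    (sgaphat : ℝ) (hsgaphat : 0 < sgaphat)
    (Ahat : Matrix (Fin n) (Fin m ⊕ Fin m) ℝ)
    (hAhat : Ahat = Matrix.fromCols A (Matrix.of fun i (_ : Fin m) => -bhat i))
    (hrank : Ahat.rank = n)
    (hη : etaA Ahat (Sum.elim s fun _ => sgaphat) ≤ 1 / 40)
    (sgaphat' : ℝ) (hsgaphat' : sgaphat' = (1 + 1 / (10 * Real.sqrt m)) * sgaphat) :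
    etaA Ahat (Sum.elim s fun _ => sgaphat') ≤ 51 / 400 := by
  -- basic positivity facts
  have hm0 : (0 : ℝ) < m := by exact_mod_cast hm
  have hm1 : (1 : ℝ) ≤ m := by exact_mod_cast hm
  have hsm1 : 1 ≤ Real.sqrt m := by
    rw [show (1:ℝ) = Real.sqrt 1 by rw [Real.sqrt_one]]
    exact Real.sqrt_le_sqrt hm1
  have hsm0 : 0 < Real.sqrt m := lt_of_lt_of_le one_pos hsm1
  set δ : ℝ := 1 / (10 * Real.sqrt m) with hδ
  have hδpos : 0 < δ := by positivity
  have hδle : δ ≤ 1 / 10 := by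
    rw [hδ]
    rw [div_le_div_iff₀ (by positivity) (by norm_num)]
    nlinarith
  have hsg' : 0 < sgaphat' := by
    rw [hsgaphat']
    have : (0:ℝ) < 1 + δ := by linarith
    exact mul_pos this hsgaphat
  set t : Fin m ⊕ Fin m → ℝ := Sum.elim s fun _ => sgaphat with hts
  set t' : Fin m ⊕ Fin m → ℝ := Sum.elim s fun _ => sgaphat' with hts'
  have ht : ∀ i, 0 < t i := by rintro (i | i) <;> simp [hts, hs i, hsgaphat]
  have ht' : ∀ i, 0 < t' i := by rintro (i | i) <;> simp [hts', hs i, hsg']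
  set M : Matrix (Fin n) (Fin m ⊕ Fin m) ℝ := Ahat * diagInv t with hM
  set N : Matrix (Fin n) (Fin m ⊕ Fin m) ℝ := Ahat * diagInv t' with hNdef
  have hMdet : IsUnit (M * Mᵀ).det := gram_isUnit Ahat hrank t ht
  have hNdet : IsUnit (N * Nᵀ).det := gram_isUnit Ahat hrank t' ht'
  set c : Fin m ⊕ Fin m → ℝ := Sum.elim (fun _ => (1:ℝ)) fun _ => sgaphat / sgaphat' with hc
  set d : Fin m ⊕ Fin m → ℝ := Sum.elim (fun _ => (1:ℝ)) fun _ => sgaphat' / sgaphat with hd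
  have hcd : ∀ i, c i * d i = 1 := by
    rintro (i | i)
    · simp [hc, hd]
    · simp only [hc, hd, Sum.elim_inr]
      field_simp
  have hsgne : sgaphat ≠ 0 := hsgaphat.ne'
  have hsgne' : sgaphat' ≠ 0 := hsg'.ne'
  have hdiag : diagInv t' = diagInv t * Matrix.diagonal c := by
    rw [diagInv, diagInv, Matrix.diagonal_mul_diagonal]
    refine congrArg Matrix.diagonal (funext fun i => ?_)
    rcases i with i | i
    · simp [hts, hts', hc]
    · simp only [hts, hts', hc, Sum.elim_inr, Pi.mul_apply]
      field_simp
  have hN : N = M * Matrix.diagonal c := by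
    rw [hNdef, hdiag, hM, Matrix.mul_assoc]
  set P : Matrix (Fin m ⊕ Fin m) (Fin m ⊕ Fin m) ℝ := Mᵀ * (M * Mᵀ)⁻¹ * M with hP
  set P' : Matrix (Fin m ⊕ Fin m) (Fin m ⊕ Fin m) ℝ := Nᵀ * (N * Nᵀ)⁻¹ * N with hP'
  set q : Fin m ⊕ Fin m → ℝ := P *ᵥ fun _ => 1 with hq
  set r : Fin m ⊕ Fin m → ℝ := (fun _ => (1:ℝ)) - q with hr
  have hηq : eucNorm q ≤ 1 / 40 := by
    have h := hη
    rw [etaA_eq Ahat t, ← hM] at h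
    rw [hq, hP]
    exact h
  have hMr : M *ᵥ r = 0 := by
    rw [hr, Matrix.mulVec_sub, hq, Matrix.mulVec_mulVec, hP, mul_proj M hMdet, sub_self]
  have hNdr : N *ᵥ (fun i => d i * r i) = 0 := by
    rw [hN, ← Matrix.mulVec_mulVec]
    have hdr : (Matrix.diagonal c) *ᵥ (fun i => d i * r i) = r := by
      funext i
      rw [Matrix.mulVec_diagonal, ← mul_assoc, hcd i, one_mul]
    rw [hdr, hMr]
  have hP'dr : P' *ᵥ (fun i => d i * r i) = 0 := by
    rw [hP', ← Matrix.mulVec_mulVec, ← Matrix.mulVec_mulVec, hNdr, Matrix.mulVec_zero,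
      Matrix.mulVec_zero]
  have hkey : P' *ᵥ (fun _ => (1:ℝ)) =
      P' *ᵥ ((fun _ => (1:ℝ)) - fun i => d i * r i) := by
    rw [Matrix.mulVec_sub, hP'dr, sub_zero]
  have hgoal : etaA Ahat t' = eucNorm (P' *ᵥ fun _ => (1:ℝ)) := by
    rw [etaA_eq, ← hNdef, ← hP']
  rw [hgoal, hkey]
  -- bound the projection of the shifted vector
  have hproj : eucNorm (P' *ᵥ ((fun _ => (1:ℝ)) - fun i => d i * r i)) ≤
      eucNorm ((fun _ => (1:ℝ)) - fun i => d i * r i) :=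
    proj_norm_le P' (proj_transpose N) (proj_mul_self N hNdet) _
  -- decompose the vector
  have hdec : ((fun _ => (1:ℝ)) - fun i => d i * r i) =
      (fun i => 1 - d i) + fun i => d i * q i := by
    funext i
    simp only [Pi.sub_apply, Pi.add_apply, hr]
    ring
  have hd_inr : sgaphat' / sgaphat = 1 + δ := by
    rw [hsgaphat']
    field_simp
  have hu : eucNorm (fun i => 1 - d i) = 1 / 10 := by
    rw [eucNorm, dotProduct, Fintype.sum_sum_type]
    have h1 : ∀ i : Fin m, (1 - d (Sum.inl i)) * (1 - d (Sum.inl i)) = 0 := by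
      intro i; simp [hd]
    have h2 : ∀ i : Fin m, (1 - d (Sum.inr i)) * (1 - d (Sum.inr i)) = δ ^ 2 := by
      intro i; simp only [hd, Sum.elim_inr, hd_inr]; ring
    have hmne : (m : ℝ) ≠ 0 := ne_of_gt hm0
    have hδ2 : δ ^ 2 = 1 / (100 * m) := by
      rw [hδ, div_pow, one_pow, mul_pow, Real.sq_sqrt hm0.le]
      norm_num
    rw [Finset.sum_congr rfl fun i _ => h1 i, Finset.sum_congr rfl fun i _ => h2 i,
      Finset.sum_const_zero, zero_add, Finset.sum_const, Finset.card_univ, Fintype.card_fin,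
      nsmul_eq_mul, hδ2,
      show (m : ℝ) * (1 / (100 * m)) = 1 / 100 from by field_simp,
      show (1:ℝ)/100 = (1/10)^2 from by norm_num,
      Real.sqrt_sq (by norm_num : (0:ℝ) ≤ 1/10)]
  have hw : eucNorm (fun i => d i * q i) ≤ (11/10) * eucNorm q := by
    apply eucNorm_pointwise_mul_le _ _ _ (by norm_num)
    rintro (i | i)
    · simp [hd]; norm_num
    · simp only [hd, Sum.elim_inr, hd_inr]
      rw [abs_of_pos (by linarith)]
      linarith
  calc eucNorm (P' *ᵥ ((fun _ => (1:ℝ)) - fun i => d i * r i))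
      ≤ eucNorm ((fun _ => (1:ℝ)) - fun i => d i * r i) := hproj
    _ = eucNorm ((fun i => 1 - d i) + fun i => d i * q i) := by rw [hdec]
    _ ≤ eucNorm (fun i => 1 - d i) + eucNorm (fun i => d i * q i) := eucNorm_add_le _ _
    _ ≤ 1/10 + (11/10) * (1/40) := by
        rw [hu]
        have : (11/10 : ℝ) * eucNorm q ≤ (11/10) * (1/40) :=
          mul_le_mul_of_nonneg_left hηq (by norm_num)
        linarith [hw]
    _ ≤ 51 / 400 := by norm_num
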